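/- Let X be a finite set of unit vectors in R^d with a probability distribution μ, and suppose (X,μ) is in (1/4)-isotropic position, i.e., for every nonzero v in R^d, (3/4)(1/d) ≤ Σ_{x∈X} μ(x)⟨x,v⟩²/‖v‖² ≤ (5/4)(1/d). Then for any hyperplane normal vector h ≠ 0, at least a 3/(8d) fraction of (X,μ) (measured by μ) has normalized margin |⟨x,h⟩|/‖h‖ at least √(3/(8d)). -/

import Mathlib

open scoped RealInnerProductSpace BigOperators

/-- If a finite set of unit vectors `X` with distribution `μ` is in
`1/4`-isotropic position, then for any nonzero `h`, at least a `3/(8d)` fraction of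
`(X,μ)` has normalized margin at least `√(3/(8d))`. -/
theorem stmt_0 (d : ℕ) (hd : 0 < d) (X : Finset (EuclideanSpace ℝ (Fin d)))
    (μ : EuclideanSpace ℝ (Fin d) → ℝ)
    (hμ0 : ∀ x ∈ X, 0 ≤ μ x) (hμ1 : ∑ x ∈ X, μ x = 1)
    (hunit : ∀ x ∈ X, ‖x‖ = 1)
    (hiso : ∀ v : EuclideanSpace ℝ (Fin d), v ≠ 0 →
      (3 / 4) * (1 / d) ≤ ∑ x ∈ X, μ x * ⟪x, v⟫ ^ 2 / ‖v‖ ^ 2 ∧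
      ∑ x ∈ X, μ x * ⟪x, v⟫ ^ 2 / ‖v‖ ^ 2 ≤ (5 / 4) * (1 / d))
    (h : EuclideanSpace ℝ (Fin d)) (hh : h ≠ 0) :
    3 / (8 * d) ≤
      ∑ x ∈ X.filter (fun x => Real.sqrt (3 / (8 * d)) ≤ |⟪x, h⟫| / ‖h‖), μ x := by
  classical
  have hdpos : (0:ℝ) < d := by exact_mod_cast hd
  set t : ℝ := 3 / (8 * d) with ht
  have htpos : 0 < t := by positivity
  have hhn : (0:ℝ) < ‖h‖ := by simpa [norm_pos_iff] using hh
  set S := X.filter (fun x => Real.sqrt t ≤ |⟪x, h⟫| / ‖h‖) with hS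
  have hlow := (hiso h hh).1
  -- each term over S is at most μ x
  have hterm_le : ∀ x ∈ S, μ x * ⟪x, h⟫ ^ 2 / ‖h‖ ^ 2 ≤ μ x := by
    intro x hx
    have hxX : x ∈ X := Finset.mem_filter.mp hx |>.1
    have hcs : |⟪x, h⟫| ≤ ‖h‖ := by
      have := abs_real_inner_le_norm x h
      simpa [hunit x hxX] using this
    have hsq : ⟪x, h⟫ ^ 2 ≤ ‖h‖ ^ 2 := by
      have := mul_self_le_mul_self (abs_nonneg _) hcs
      simpa [sq_abs, pow_two] using this
    rw [div_le_iff₀ (by positivity)]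
    have := mul_le_mul_of_nonneg_left hsq (hμ0 x hxX)
    linarith [this]
  -- each term over X \ S is at most μ x * t
  have hterm_small : ∀ x ∈ X \ S, μ x * ⟪x, h⟫ ^ 2 / ‖h‖ ^ 2 ≤ μ x * t := by
    intro x hx
    obtain ⟨hxX, hxS⟩ := Finset.mem_sdiff.mp hx
    have hns : ¬ Real.sqrt t ≤ |⟪x, h⟫| / ‖h‖ := by
      intro hc
      exact hxS (Finset.mem_filter.mpr ⟨hxX, hc⟩)
    push_neg at hns
    have hlt : (|⟪x, h⟫| / ‖h‖) ^ 2 < t := by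
      have := mul_self_lt_mul_self (by positivity) hns
      simpa [Real.mul_self_sqrt htpos.le, pow_two] using this
    have heq : ⟪x, h⟫ ^ 2 / ‖h‖ ^ 2 = (|⟪x, h⟫| / ‖h‖) ^ 2 := by
      rw [div_pow, sq_abs]
    have h2 : ⟪x, h⟫ ^ 2 / ‖h‖ ^ 2 ≤ t := by rw [heq]; exact hlt.le
    calc μ x * ⟪x, h⟫ ^ 2 / ‖h‖ ^ 2 = μ x * (⟪x, h⟫ ^ 2 / ‖h‖ ^ 2) := by ring
      _ ≤ μ x * t := mul_le_mul_of_nonneg_left h2 (hμ0 x hxX)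
  have hsplit : ∑ x ∈ X, μ x * ⟪x, h⟫ ^ 2 / ‖h‖ ^ 2
      = ∑ x ∈ S, μ x * ⟪x, h⟫ ^ 2 / ‖h‖ ^ 2 + ∑ x ∈ X \ S, μ x * ⟪x, h⟫ ^ 2 / ‖h‖ ^ 2 := by
    rw [add_comm]
    exact (Finset.sum_sdiff (Finset.filter_subset _ _)).symm
  have hSsum : ∑ x ∈ S, μ x * ⟪x, h⟫ ^ 2 / ‖h‖ ^ 2 ≤ ∑ x ∈ S, μ x :=
    Finset.sum_le_sum hterm_le
  have hsdiff_le_one : ∑ x ∈ X \ S, μ x ≤ 1 := by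
    rw [← hμ1]
    exact Finset.sum_le_sum_of_subset_of_nonneg (Finset.sdiff_subset) (fun x hx _ => hμ0 x hx)
  have hsdiff_nonneg : (0:ℝ) ≤ ∑ x ∈ X \ S, μ x :=
    Finset.sum_nonneg fun x hx => hμ0 x (Finset.mem_sdiff.mp hx).1
  have hsmall : ∑ x ∈ X \ S, μ x * ⟪x, h⟫ ^ 2 / ‖h‖ ^ 2 ≤ t := by
    calc ∑ x ∈ X \ S, μ x * ⟪x, h⟫ ^ 2 / ‖h‖ ^ 2 ≤ ∑ x ∈ X \ S, μ x * t :=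
          Finset.sum_le_sum hterm_small
      _ = (∑ x ∈ X \ S, μ x) * t := by rw [Finset.sum_mul]
      _ ≤ 1 * t := mul_le_mul_of_nonneg_right hsdiff_le_one htpos.le
      _ = t := one_mul t
  have hkey : (3:ℝ) / 4 * (1 / d) ≤ (∑ x ∈ S, μ x) + t := by
    calc (3:ℝ) / 4 * (1 / d) ≤ ∑ x ∈ X, μ x * ⟪x, h⟫ ^ 2 / ‖h‖ ^ 2 := hlow
      _ = _ + _ := hsplit
      _ ≤ (∑ x ∈ S, μ x) + t := add_le_add hSsum hsmall
  have : (3:ℝ) / 4 * (1 / d) - t = t := by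
    field_simp [ht]
    rw [ht]
    field_simp
    ring
  linarith
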